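/- Let (s_n) be a sequence of non-negative real numbers with s_n ≤ d for all n, where d ∈ ℕ∖{0}. Let (α_n) ⊂ (0,1) and let (r_n), (v_n) be sequences of real numbers. Assume there is a monotone function A : ℕ → ℕ with Σ_{i=1}^{A(k)} α_i ≥ k for all k ∈ ℕ, and that s_{i+1} ≤ (1−α_i)(s_i + v_i) + α_i r_i for all i ∈ ℕ. Let k, n, q ∈ ℕ be such that for all i ∈ [n,q], v_i ≤ 1/(3(k+1)(q+1)) and r_i ≤ 1/(3(k+1)). Then for all i ∈ [σ(k,n), q] one has s_i ≤ 1/(k+1), where σ(k,n) := A(n + ⌈ln(3d(k+1))⌉) + 1. -/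

import Mathlib

/-- quantitative lemma, variant of Lemma 14 of [PP(ta)] with γ ≡ 0. -/
theorem quantitative_lemma_Xu2
    (d : ℕ) (hd : 0 < d)
    (s α r v : ℕ → ℝ)
    (hs : ∀ n, 0 ≤ s n) (hsd : ∀ n, s n ≤ d)
    (hα : ∀ n, α n ∈ Set.Ioo (0 : ℝ) 1)
    (A : ℕ → ℕ) (hAmono : Monotone A)
    (hA : ∀ k : ℕ, (k : ℝ) ≤ ∑ i ∈ Finset.Icc 1 (A k), α i)
    (hrec : ∀ i, s (i + 1) ≤ (1 - α i) * (s i + v i) + α i * r i)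
    (k n q : ℕ)
    (hv : ∀ i, n ≤ i → i ≤ q → v i ≤ 1 / (3 * (k + 1) * (q + 1)))
    (hr : ∀ i, n ≤ i → i ≤ q → r i ≤ 1 / (3 * (k + 1))) :
    ∀ i, A (n + Nat.ceil (Real.log (3 * (d : ℝ) * (k + 1)))) + 1 ≤ i → i ≤ q →
      s i ≤ 1 / (k + 1) := by
  intro i hi1 hi2
  set m : ℕ := Nat.ceil (Real.log (3 * (d : ℝ) * (k + 1))) with hm
  set R : ℝ := 1 / (3 * ((k : ℝ) + 1)) with hRdef
  set V : ℝ := 1 / (3 * ((k : ℝ) + 1) * ((q : ℝ) + 1)) with hVdef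
  have hk1 : (0:ℝ) < (k:ℝ) + 1 := by positivity
  have hq1 : (0:ℝ) < (q:ℝ) + 1 := by positivity
  have hR0 : 0 < R := by rw [hRdef]; positivity
  have hV0 : 0 < V := by rw [hVdef]; positivity
  have hα0 : ∀ j, 0 < α j := fun j => (hα j).1
  have hα1 : ∀ j, α j < 1 := fun j => (hα j).2
  set P : ℕ → ℝ := fun i => ∏ j ∈ Finset.Ico n i, (1 - α j) with hPdef
  have hP0 : ∀ i, 0 ≤ P i := fun i =>
    Finset.prod_nonneg (fun j _ => by linarith [hα1 j])
  have hP1 : ∀ i, P i ≤ 1 := fun i =>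
    Finset.prod_le_one (fun j _ => by linarith [hα1 j]) (fun j _ => by linarith [hα0 j])
  -- self-bound for A
  have hAk : ∀ j : ℕ, j ≤ A j := by
    intro j
    have h1 : ((j : ℝ)) ≤ ∑ i ∈ Finset.Icc 1 (A j), α i := hA j
    have h2 : ∑ i ∈ Finset.Icc 1 (A j), α i ≤ (Finset.Icc 1 (A j)).card • (1:ℝ) :=
      Finset.sum_le_card_nsmul _ _ _ (fun j _ => le_of_lt (hα1 j))
    have h3 : ((Finset.Icc 1 (A j)).card : ℝ) ≤ (A j : ℝ) := by
      rw [Nat.card_Icc]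
      simp
    have : (j : ℝ) ≤ (A j : ℝ) := by
      calc (j:ℝ) ≤ _ := h1
        _ ≤ _ := h2
        _ = ((Finset.Icc 1 (A j)).card : ℝ) := by simp
        _ ≤ _ := h3
    exact_mod_cast this
  have hni : n ≤ i := by
    have := hAk (n + m)
    omega
  -- main invariant
  have key : ∀ j, n ≤ j → j ≤ q →
      s j ≤ P j * d + ((j - n : ℕ) : ℝ) * V + (1 - P j) * R := by
    intro j hnj
    induction j, hnj using Nat.le_induction with
    | base =>
      intro _
      have : P n = 1 := by simp [hPdef]
      rw [this]
      simp
      exact hsd n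
    | succ j hnj ih =>
      intro hjq
      have hjq' : j ≤ q := Nat.le_of_succ_le hjq
      have hB := ih hjq'
      have hv' := hv j hnj hjq'
      have hr' := hr j hnj hjq'
      have h1 := hrec j
      have hPs : P (j+1) = P j * (1 - α j) := Finset.prod_Ico_succ_top hnj _
      have hcast : ((j+1-n : ℕ):ℝ) = ((j-n:ℕ):ℝ) + 1 := by
        have h : j+1-n = (j-n)+1 := by omega
        rw [h]; push_cast; ring
      rw [hPs, hcast]
      have hv'' : v j ≤ V := hv'
      have hr'' : r j ≤ R := hr'
      have hc0 : (0:ℝ) ≤ ((j-n:ℕ):ℝ) := Nat.cast_nonneg _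
      nlinarith [hP0 j, hP1 j, hα0 j, hα1 j, hs j, hc0, hV0, hR0,
        mul_le_mul_of_nonneg_left (show s j + v j ≤ P j * d + ((j-n:ℕ):ℝ) * V + (1 - P j) * R + V by linarith)
          (show (0:ℝ) ≤ 1 - α j by linarith [hα1 j]),
        mul_le_mul_of_nonneg_left hr'' (le_of_lt (hα0 j)),
        mul_nonneg (mul_nonneg (le_of_lt (hα0 j)) hc0) (le_of_lt hV0),
        mul_nonneg (le_of_lt (hα0 j)) (le_of_lt hV0)]
  have hkey := key i hni hi2
  -- bound on the sum of α over Ico n i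
  have hsum : (m : ℝ) ≤ ∑ j ∈ Finset.Ico n i, α j := by
    have hsub : Finset.Icc 1 (A (n+m)) ⊆ Finset.Ico 1 i := by
      intro x hx
      simp only [Finset.mem_Icc, Finset.mem_Ico] at hx ⊢
      omega
    have h1i : ((n:ℝ) + m) ≤ ∑ j ∈ Finset.Ico 1 i, α j := by
      calc ((n:ℝ) + m) = ((n + m : ℕ) : ℝ) := by push_cast; ring
        _ ≤ ∑ j ∈ Finset.Icc 1 (A (n+m)), α j := hA (n+m)
        _ ≤ ∑ j ∈ Finset.Ico 1 i, α j :=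
          Finset.sum_le_sum_of_subset_of_nonneg hsub (fun j _ _ => le_of_lt (hα0 j))
    rcases Nat.eq_zero_or_pos n with hn0 | hn0
    · subst hn0
      have hmono : ∑ j ∈ Finset.Ico 1 i, α j ≤ ∑ j ∈ Finset.Ico 0 i, α j :=
        Finset.sum_le_sum_of_subset_of_nonneg
          (Finset.Ico_subset_Ico (by omega) le_rfl) (fun j _ _ => le_of_lt (hα0 j))
      simp at h1i
      linarith
    · have hsplit : ∑ j ∈ Finset.Ico 1 n, α j + ∑ j ∈ Finset.Ico n i, α j
          = ∑ j ∈ Finset.Ico 1 i, α j :=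
        Finset.sum_Ico_consecutive _ (by omega) hni
      have hcard : ∑ j ∈ Finset.Ico 1 n, α j ≤ ((Finset.Ico 1 n).card : ℝ) := by
        have := Finset.sum_le_card_nsmul (Finset.Ico 1 n) α 1 (fun j _ => le_of_lt (hα1 j))
        simpa using this
      have hcard2 : ((Finset.Ico 1 n).card : ℝ) ≤ (n : ℝ) := by
        rw [Nat.card_Ico]
        exact_mod_cast Nat.sub_le _ _
      linarith
  -- bound on P i
  have hX : (0:ℝ) < 3 * (d : ℝ) * ((k:ℝ) + 1) := by positivity
  have hPexp : P i ≤ Real.exp (-(∑ j ∈ Finset.Ico n i, α j)) := by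
    calc P i ≤ ∏ j ∈ Finset.Ico n i, Real.exp (-(α j)) := by
          apply Finset.prod_le_prod
          · intro j _; linarith [hα1 j]
          · intro j _
            have := Real.add_one_le_exp (-(α j))
            linarith
      _ = Real.exp (∑ j ∈ Finset.Ico n i, -(α j)) := (Real.exp_sum _ _).symm
      _ = Real.exp (-(∑ j ∈ Finset.Ico n i, α j)) := by rw [Finset.sum_neg_distrib]
  have hPbound : P i ≤ 1 / (3 * (d : ℝ) * ((k:ℝ) + 1)) := by
    have hlog : Real.log (3 * (d : ℝ) * ((k:ℝ) + 1)) ≤ (m : ℝ) := Nat.le_ceil _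
    calc P i ≤ Real.exp (-(∑ j ∈ Finset.Ico n i, α j)) := hPexp
      _ ≤ Real.exp (-(m : ℝ)) := Real.exp_le_exp.mpr (by linarith)
      _ ≤ Real.exp (-(Real.log (3 * (d : ℝ) * ((k:ℝ) + 1)))) :=
          Real.exp_le_exp.mpr (by linarith)
      _ = 1 / (3 * (d : ℝ) * ((k:ℝ) + 1)) := by
          rw [Real.exp_neg, Real.exp_log hX]
          ring
  -- finish
  have hd0 : (0:ℝ) < (d:ℝ) := by exact_mod_cast hd
  have hPd : P i * d ≤ R := by
    have := mul_le_mul_of_nonneg_right hPbound (le_of_lt hd0)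
    calc P i * d ≤ (1 / (3 * (d : ℝ) * ((k:ℝ) + 1))) * d := this
      _ = R := by rw [hRdef]; field_simp
  have hiV : ((i - n : ℕ):ℝ) * V ≤ R := by
    have h1 : ((i - n : ℕ):ℝ) ≤ (q:ℝ) + 1 := by
      have : (i - n : ℕ) ≤ q := by omega
      have h := (Nat.cast_le (α := ℝ)).mpr this
      linarith
    have h2 : ((i - n : ℕ):ℝ) * V ≤ ((q:ℝ)+1) * V :=
      mul_le_mul_of_nonneg_right h1 (le_of_lt hV0)
    have h3 : ((q:ℝ)+1) * V = R := by
      rw [hVdef, hRdef]; field_simp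
    linarith
  have hPR : (1 - P i) * R ≤ R := by
    nlinarith [hP0 i, hR0]
  have h3R : R + R + R = 1 / ((k:ℝ) + 1) := by
    have hne : (k:ℝ) + 1 ≠ 0 := ne_of_gt hk1
    rw [hRdef]
    rw [← add_div, ← add_div, div_eq_div_iff (by positivity) hne]
    ring
  have : s i ≤ R + R + R := by linarith
  rw [h3R] at this
  exact_mod_cast this
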